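/- Suppose f ∈ PLF(ℝ) has leftmost and rightmost gradients satisfying γ_R(f) · γ_L(f) = 1; that is, there are real numbers a_L, b_L, a_R, b_R and M > 0 with f(x) = a_L·x + b_L for all x ≤ −M, f(x) = a_R·x + b_R for all x ≥ M, and a_R · a_L = 1. Then f can be written as a composite of finitely many involutions belonging to PLF(ℝ). -/

import Mathlib

/-- `f` is a homeomorphism of `ℝ`: a bijection of `ℝ` that is continuous in both directions. -/
def IsHomeo (f : Equiv.Perm ℝ) : Prop := Continuous f ∧ Continuous f.symm

/-- `f` is locally affine at `x`: it agrees with an affine map on a neighbourhood of `x`. -/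
def IsLocallyAffineAt (f : ℝ → ℝ) (x : ℝ) : Prop :=
  ∃ a b : ℝ, ∀ᶠ y in nhds x, f y = a * y + b

/-- Membership in PLF(ℝ): a homeomorphism of `ℝ` that is locally affine at all but
finitely many points. -/
def InPLF (f : Equiv.Perm ℝ) : Prop :=
  IsHomeo f ∧ {x : ℝ | ¬ IsLocallyAffineAt (⇑f) x}.Finite

/-- Membership in PL(ℝ): a homeomorphism of `ℝ` whose set of points of non-local-affinity
has no accumulation point in `ℝ`. -/
def InPL (f : Equiv.Perm ℝ) : Prop :=
  IsHomeo f ∧ ∀ x : ℝ, ¬ AccPt x (Filter.principal {y : ℝ | ¬ IsLocallyAffineAt (⇑f) y})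

noncomputable section PLFAux

def F2 (q κ : ℝ) (x : ℝ) : ℝ := if x ≤ q then q - (x - q)/κ else q - κ*(x - q)

lemma F2_of_le {q κ z : ℝ} (h : z ≤ q) : F2 q κ z = q - (z - q)/κ := if_pos h

lemma F2_of_ge {q κ z : ℝ} (h : q ≤ z) : F2 q κ z = q - κ*(z - q) := by
  rcases eq_or_lt_of_le h with h' | h'
  · subst h'; simp [F2]
  · exact if_neg (not_le.mpr h')

lemma F2_invol {q κ : ℝ} (hκ : 0 < κ) (x : ℝ) : F2 q κ (F2 q κ x) = x := by
  have hκ' : κ ≠ 0 := ne_of_gt hκ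
  rcases le_or_gt x q with h | h
  · have h1 : q ≤ F2 q κ x := by
      rw [F2_of_le h]
      have h2 : (x - q)/κ ≤ 0 := div_nonpos_iff.mpr (Or.inr ⟨by linarith, hκ.le⟩)
      linarith
    rw [F2_of_ge h1, F2_of_le h]
    field_simp
    ring
  · have h1 : F2 q κ x ≤ q := by
      rw [F2_of_ge h.le]
      nlinarith
    rw [F2_of_le h1, F2_of_ge h.le]
    field_simp
    ring

def inv2 (q κ : ℝ) (hκ : 0 < κ) : Equiv.Perm ℝ :=
  ⟨F2 q κ, F2 q κ, F2_invol hκ, F2_invol hκ⟩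

lemma inv2_apply (q κ : ℝ) (hκ : 0 < κ) (x : ℝ) : inv2 q κ hκ x = F2 q κ x := rfl

lemma F2_continuous (q κ : ℝ) : Continuous (F2 q κ) := by
  unfold F2
  apply Continuous.if_le (by continuity) (by continuity) continuous_id continuous_const
  intro a ha
  simp only [id_eq] at ha
  rw [ha]
  ring

lemma inv2_mul_self (q κ : ℝ) (hκ : 0 < κ) : inv2 q κ hκ * inv2 q κ hκ = 1 := by
  apply Equiv.ext
  intro x
  rw [Equiv.Perm.mul_apply]
  show F2 q κ (F2 q κ x) = x
  exact F2_invol hκ x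

lemma F2_one (q x : ℝ) : F2 q 1 x = 2*q - x := by
  unfold F2; split <;> ring

lemma inv2_inPLF (q κ : ℝ) (hκ : 0 < κ) : InPLF (inv2 q κ hκ) := by
  constructor
  · constructor
    · exact F2_continuous q κ
    · show Continuous ⇑(inv2 q κ hκ).symm
      have : ⇑(inv2 q κ hκ).symm = F2 q κ := rfl
      rw [this]
      exact F2_continuous q κ
  · apply Set.Finite.subset (Set.finite_singleton q)
    intro x hx
    simp only [Set.mem_setOf_eq] at hx
    simp only [Set.mem_singleton_iff]
    by_contra hxq
    apply hx
    rcases lt_or_gt_of_ne hxq with h | h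
    · refine ⟨-(1/κ), q + q/κ, ?_⟩
      filter_upwards [Iio_mem_nhds h] with y hy
      show F2 q κ y = _
      rw [F2_of_le (le_of_lt hy)]
      ring
    · refine ⟨-κ, q + κ*q, ?_⟩
      filter_upwards [Ioi_mem_nhds h] with y hy
      show F2 q κ y = _
      rw [F2_of_ge (le_of_lt hy)]
      ring

-- assembling products
lemma cons_prod {k : ℕ} (σ : Equiv.Perm ℝ) (g : Fin k → Equiv.Perm ℝ) :
    (List.ofFn (Fin.cons σ g : Fin (k+1) → Equiv.Perm ℝ)).prod = σ * (List.ofFn g).prod := by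
  rw [List.ofFn_succ]
  simp only [Fin.cons_zero, Fin.cons_succ, List.prod_cons]


-- two affine maps agreeing near a point are equal
lemma affine_eq_of_eventually {a b a' b' x : ℝ}
    (h : ∀ᶠ y in nhds x, a * y + b = a' * y + b') : a = a' ∧ b = b' := by
  obtain ⟨ε, hε, hev⟩ := Metric.eventually_nhds_iff.mp h
  have h1 : a * x + b = a' * x + b' := hev (by simp [hε])
  have h2 : a * (x + ε/2) + b = a' * (x + ε/2) + b' := by
    apply hev
    rw [Real.dist_eq]
    rw [show x + ε/2 - x = ε/2 by ring, abs_of_pos (by linarith)]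
    linarith
  have ha : a * (ε/2) = a' * (ε/2) := by linarith
  have ha' : a = a' := mul_right_cancel₀ (by positivity) ha
  rw [ha'] at h1
  exact ⟨ha', by linarith⟩

-- the clopen argument
lemma affine_on_of_loc {s : Set ℝ} (hpre : IsPreconnected s)
    {x₀ : ℝ} (hx₀ : x₀ ∈ s) {g : ℝ → ℝ}
    (h : ∀ x ∈ s, IsLocallyAffineAt g x) :
    ∃ a b : ℝ, ∀ x ∈ s, g x = a * x + b := by
  obtain ⟨a, b, hab⟩ := h x₀ hx₀
  refine ⟨a, b, ?_⟩
  set u : Set ℝ := {x | ∀ᶠ y in nhds x, g y = a * y + b} with hu_def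
  set v : Set ℝ := {x | ∃ p : ℝ × ℝ, ¬(p.1 = a ∧ p.2 = b) ∧ ∀ᶠ y in nhds x, g y = p.1 * y + p.2}
    with hv_def
  have hu : IsOpen u := by
    rw [isOpen_iff_mem_nhds]
    intro x hx
    exact hx.eventually_nhds
  have hv : IsOpen v := by
    rw [isOpen_iff_mem_nhds]
    intro x hx
    obtain ⟨p, hp, hev⟩ := hx
    filter_upwards [hev.eventually_nhds] with y hy
    exact ⟨p, hp, hy⟩
  have hcover : s ⊆ u ∪ v := by
    intro x hx
    obtain ⟨a', b', h'⟩ := h x hx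
    by_cases hc : a' = a ∧ b' = b
    · left
      rw [hc.1, hc.2] at h'
      exact h'
    · right
      exact ⟨(a', b'), hc, h'⟩
  have hdisj : ∀ x, x ∈ u ∩ v → False := by
    rintro x ⟨hxu, ⟨p, hp, hev⟩⟩
    have hE : ∀ᶠ y in nhds x, a * y + b = p.1 * y + p.2 := by
      filter_upwards [hxu, hev] with y h1 h2
      rw [← h1, ← h2]
    obtain ⟨ha, hb⟩ := affine_eq_of_eventually hE
    exact hp ⟨ha.symm, hb.symm⟩
  have hsv : ¬(s ∩ v).Nonempty := by
    rintro ⟨y, hys, hyv⟩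
    obtain ⟨z, _, hz⟩ := hpre u v hu hv hcover ⟨x₀, hx₀, hab⟩ ⟨y, hys, hyv⟩
    exact hdisj z hz
  intro x hx
  rcases hcover hx with hxu | hxv
  · exact hxu.self_of_nhds
  · exact absurd ⟨x, hx, hxv⟩ hsv

-- extend from open interval to closed
lemma affine_on_Icc_of_Ioo {g : ℝ → ℝ} (hg : Continuous g) {a b s c : ℝ} (hab : a < b)
    (h : ∀ y ∈ Set.Ioo a b, g y = s*y + c) : ∀ y ∈ Set.Icc a b, g y = s*y + c := by
  have h1 : Set.EqOn g (fun y => s*y + c) (Set.Ioo a b) := h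
  have h2 := h1.closure hg (by continuity)
  rw [closure_Ioo (ne_of_lt hab)] at h2
  exact h2


-- f injective; affine with slope s1 on [t-ε,t], slope s2 on [t,t+ε]  ⟹  slopes same sign
lemma slopes_same_sign {f : ℝ → ℝ} (hinj : Function.Injective f) {t ε₀ s1 b1 s2 b2 : ℝ}
    (hε : 0 < ε₀)
    (h1 : ∀ y ∈ Set.Icc (t - ε₀) t, f y = s1*y + b1)
    (h2 : ∀ y ∈ Set.Icc t (t + ε₀), f y = s2*y + b2) :
    0 < s1 * s2 := by
  have ht1 : f t = s1*t + b1 := h1 t ⟨by linarith, le_rfl⟩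
  have ht2 : f t = s2*t + b2 := h2 t ⟨le_rfl, by linarith⟩
  have hs1 : s1 ≠ 0 := by
    intro h0
    have e1 : f (t - ε₀) = f (t - ε₀/2) := by
      rw [h1 (t - ε₀) ⟨le_rfl, by linarith⟩, h1 (t - ε₀/2) ⟨by linarith, by linarith⟩, h0]
      ring
    have := hinj e1
    linarith
  have hs2 : s2 ≠ 0 := by
    intro h0
    have e1 : f (t + ε₀) = f (t + ε₀/2) := by
      rw [h2 (t + ε₀) ⟨by linarith, le_rfl⟩, h2 (t + ε₀/2) ⟨by linarith, by linarith⟩, h0]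
      ring
    have := hinj e1
    linarith
  rcases lt_or_gt_of_ne hs1 with hn1 | hp1 <;> rcases lt_or_gt_of_ne hs2 with hn2 | hp2
  · exact mul_pos_of_neg_of_neg hn1 hn2
  · -- s1 < 0 < s2 : contradiction
    exfalso
    set η := min (-s1*ε₀) (s2*ε₀) / 2 with hη_def
    have hη : 0 < η := by
      have := lt_min (mul_pos (by linarith : (0:ℝ) < -s1) hε) (mul_pos hp2 hε)
      simp only [hη_def]
      linarith [lt_min (mul_pos (by linarith : (0:ℝ) < -s1) hε) (mul_pos hp2 hε)]
    have hη1 : η ≤ -s1*ε₀/2 := by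
      have := min_le_left (-s1*ε₀) (s2*ε₀); simp only [hη_def]; linarith
    have hη2 : η ≤ s2*ε₀/2 := by
      have := min_le_right (-s1*ε₀) (s2*ε₀); simp only [hη_def]; linarith
    set y1 := t + η/s1 with hy1
    set y2 := t + η/s2 with hy2
    have hy1lt : y1 < t := by
      have : η/s1 < 0 := div_neg_of_pos_of_neg hη hn1
      simp only [hy1]; linarith
    have hy1ge : t - ε₀ ≤ y1 := by
      have h3 : η / (-s1) ≤ ε₀/2 := by
        rw [div_le_iff₀ (by linarith : (0:ℝ) < -s1)]
        nlinarith
      have h4 : η/s1 = -(η/(-s1)) := by field_simp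
      simp only [hy1]
      rw [h4]
      linarith
    have hy2gt : t < y2 := by
      have : 0 < η/s2 := div_pos hη hp2
      simp only [hy2]; linarith
    have hy2le : y2 ≤ t + ε₀ := by
      have h3 : η / s2 ≤ ε₀/2 := by
        rw [div_le_iff₀ hp2]
        nlinarith
      simp only [hy2]
      linarith
    have c1 : s1 * (η/s1) = η := by field_simp
    have c2 : s2 * (η/s2) = η := by field_simp
    have e1 : f y1 = f t + η := by
      rw [h1 y1 ⟨hy1ge, hy1lt.le⟩, ht1, hy1, mul_add, c1]
      ring
    have e2 : f y2 = f t + η := by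
      rw [h2 y2 ⟨hy2gt.le, hy2le⟩, ht2, hy2, mul_add, c2]
      ring
    have := hinj (e1.trans e2.symm)
    linarith
  · -- 0 < s1, s2 < 0 : contradiction
    exfalso
    set η := min (s1*ε₀) (-s2*ε₀) / 2 with hη_def
    have hη : 0 < η := by
      simp only [hη_def]
      linarith [lt_min (mul_pos hp1 hε) (mul_pos (by linarith : (0:ℝ) < -s2) hε)]
    have hη1 : η ≤ s1*ε₀/2 := by
      have := min_le_left (s1*ε₀) (-s2*ε₀); simp only [hη_def]; linarith
    have hη2 : η ≤ -s2*ε₀/2 := by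
      have := min_le_right (s1*ε₀) (-s2*ε₀); simp only [hη_def]; linarith
    set y1 := t - η/s1 with hy1
    set y2 := t - η/s2 with hy2
    have hy1lt : y1 < t := by
      have : 0 < η/s1 := div_pos hη hp1
      simp only [hy1]; linarith
    have hy1ge : t - ε₀ ≤ y1 := by
      have h3 : η / s1 ≤ ε₀/2 := by
        rw [div_le_iff₀ hp1]
        nlinarith
      simp only [hy1]; linarith
    have hy2gt : t < y2 := by
      have : η/s2 < 0 := div_neg_of_pos_of_neg hη hn2
      simp only [hy2]; linarith
    have hy2le : y2 ≤ t + ε₀ := by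
      have h3 : η / (-s2) ≤ ε₀/2 := by
        rw [div_le_iff₀ (by linarith : (0:ℝ) < -s2)]
        nlinarith
      have h4 : η/s2 = -(η/(-s2)) := by field_simp
      simp only [hy2]
      rw [h4]
      linarith
    have c1 : s1 * (η/s1) = η := by field_simp
    have c2 : s2 * (η/s2) = η := by field_simp
    have e1 : f y1 = f t - η := by
      rw [h1 y1 ⟨hy1ge, hy1lt.le⟩, ht1, hy1, mul_sub, c1]
      ring
    have e2 : f y2 = f t - η := by
      rw [h2 y2 ⟨hy2gt.le, hy2le⟩, ht2, hy2, mul_sub, c2]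
      ring
    have := hinj (e1.trans e2.symm)
    linarith
  · exact mul_pos hp1 hp2


-- σ ∘ f is locally affine at t when κ is chosen to cancel the slope jump.
-- Increasing case: 0 < s1, 0 < s2, κ*κ*s2 = s1.
lemma cancel_break_incr {f : ℝ → ℝ} {t ε₀ s1 b1 s2 b2 κ : ℝ}
    (hε : 0 < ε₀) (hκ : 0 < κ)
    (h1 : ∀ y ∈ Set.Icc (t - ε₀) t, f y = s1*y + b1)
    (h2 : ∀ y ∈ Set.Icc t (t + ε₀), f y = s2*y + b2)
    (hs1 : 0 < s1) (hs2 : 0 < s2) (hκs : κ*κ*s2 = s1) :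
    IsLocallyAffineAt (fun y => F2 (f t) κ (f y)) t := by
  have hκ' : κ ≠ 0 := ne_of_gt hκ
  have ht1 : f t = s1*t + b1 := h1 t ⟨by linarith, le_rfl⟩
  have ht2 : f t = s2*t + b2 := h2 t ⟨le_rfl, by linarith⟩
  refine ⟨-(κ*s2), f t + κ*s2*t, ?_⟩
  filter_upwards [Ioo_mem_nhds (by linarith : t - ε₀ < t) (by linarith : t < t + ε₀)] with y hy
  rcases le_total y t with hyt | hyt
  · have hf : f y = s1*y + b1 := h1 y ⟨hy.1.le, hyt⟩
    have hfq : f y ≤ f t := by rw [hf, ht1]; nlinarith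
    show F2 (f t) κ (f y) = _
    have key : (s1*y + b1 - f t)/κ = κ*s2*(y - t) := by
      rw [div_eq_iff hκ', ht1]
      linear_combination (t - y) * hκs
    rw [F2_of_le hfq, hf, key]
    ring
  · have hf : f y = s2*y + b2 := h2 y ⟨hyt, hy.2.le⟩
    have hfq : f t ≤ f y := by rw [hf, ht2]; nlinarith
    show F2 (f t) κ (f y) = _
    rw [F2_of_ge hfq, hf]
    rw [ht2]
    ring

-- Decreasing case: s1 < 0, s2 < 0, κ*κ*s1 = s2.
lemma cancel_break_decr {f : ℝ → ℝ} {t ε₀ s1 b1 s2 b2 κ : ℝ}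
    (hε : 0 < ε₀) (hκ : 0 < κ)
    (h1 : ∀ y ∈ Set.Icc (t - ε₀) t, f y = s1*y + b1)
    (h2 : ∀ y ∈ Set.Icc t (t + ε₀), f y = s2*y + b2)
    (hs1 : s1 < 0) (hs2 : s2 < 0) (hκs : κ*κ*s1 = s2) :
    IsLocallyAffineAt (fun y => F2 (f t) κ (f y)) t := by
  have hκ' : κ ≠ 0 := ne_of_gt hκ
  have ht1 : f t = s1*t + b1 := h1 t ⟨by linarith, le_rfl⟩
  have ht2 : f t = s2*t + b2 := h2 t ⟨le_rfl, by linarith⟩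
  refine ⟨-(κ*s1), f t + κ*s1*t, ?_⟩
  filter_upwards [Ioo_mem_nhds (by linarith : t - ε₀ < t) (by linarith : t < t + ε₀)] with y hy
  rcases le_total y t with hyt | hyt
  · have hf : f y = s1*y + b1 := h1 y ⟨hy.1.le, hyt⟩
    have hfq : f t ≤ f y := by rw [hf, ht1]; nlinarith
    show F2 (f t) κ (f y) = _
    rw [F2_of_ge hfq, hf, ht1]
    ring
  · have hf : f y = s2*y + b2 := h2 y ⟨hyt, hy.2.le⟩
    have hfq : f y ≤ f t := by rw [hf, ht2]; nlinarith
    show F2 (f t) κ (f y) = _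
    have key : (s2*y + b2 - f t)/κ = κ*s1*(y - t) := by
      rw [div_eq_iff hκ', ht2]
      linear_combination (t - y) * hκs
    rw [F2_of_le hfq, hf, key]
    ring

-- at points other than t
lemma cancel_break_other {f : ℝ → ℝ} (hc : Continuous f) {q κ : ℝ} (hκ : 0 < κ)
    {x : ℝ} (hxq : f x ≠ q) (hx : IsLocallyAffineAt f x) :
    IsLocallyAffineAt (fun y => F2 q κ (f y)) x := by
  have hκ' : κ ≠ 0 := ne_of_gt hκ
  obtain ⟨a, b, hev⟩ := hx
  rcases lt_or_gt_of_ne hxq with hlt | hgt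
  · have hev2 : f ⁻¹' (Set.Iio q) ∈ nhds x :=
      hc.continuousAt.preimage_mem_nhds (Iio_mem_nhds hlt)
    refine ⟨-(a/κ), q + q/κ - b/κ, ?_⟩
    filter_upwards [hev, hev2] with y h1 h2
    show F2 q κ (f y) = _
    rw [F2_of_le (le_of_lt h2), h1]
    ring
  · have hev2 : f ⁻¹' (Set.Ioi q) ∈ nhds x :=
      hc.continuousAt.preimage_mem_nhds (Ioi_mem_nhds hgt)
    refine ⟨-(κ*a), q + κ*q - κ*b, ?_⟩
    filter_upwards [hev, hev2] with y h1 h2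
    show F2 q κ (f y) = _
    rw [F2_of_ge (le_of_lt h2), h1]
    ring


/-- Transform the affine tails under composition with `F2 q κ`. -/
lemma tails_transform {f : ℝ → ℝ} {aL bL aR bR M : ℝ} (q κ : ℝ) (hκ : 0 < κ) (hM : 0 < M)
    (hL : ∀ x : ℝ, x ≤ -M → f x = aL * x + bL)
    (hR : ∀ x : ℝ, M ≤ x → f x = aR * x + bR)
    (hgrad : aR * aL = 1) :
    ∃ aL' bL' aR' bR' M' : ℝ, 0 < M' ∧
      (∀ x : ℝ, x ≤ -M' → F2 q κ (f x) = aL' * x + bL') ∧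
      (∀ x : ℝ, M' ≤ x → F2 q κ (f x) = aR' * x + bR') ∧
      aR' * aL' = 1 := by
  have hκ' : κ ≠ 0 := ne_of_gt hκ
  have haR : aR ≠ 0 := by
    intro h0; rw [h0] at hgrad; simp at hgrad
  have haL : aL ≠ 0 := by
    intro h0; rw [h0] at hgrad; simp at hgrad
  rcases lt_or_gt_of_ne haR with hRneg | hRpos
  · -- aR < 0, hence aL < 0
    have hLneg : aL < 0 := by nlinarith [lt_or_gt_of_ne haL]
    set M' := max M (max ((|q| + |bR| + 1)/(-aR)) ((|q| + |bL| + 1)/(-aL))) with hM'def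
    have hM' : 0 < M' := lt_of_lt_of_le hM (le_max_left _ _)
    refine ⟨-(κ*aL), q + κ*q - κ*bL, -(aR/κ), q + q/κ - bR/κ, M', hM', ?_, ?_, ?_⟩
    · intro x hx
      have hx1 : x ≤ -M := by
        have := le_max_left M (max ((|q| + |bR| + 1)/(-aR)) ((|q| + |bL| + 1)/(-aL)))
        linarith [hx, this]
      have hx2 : (|q| + |bL| + 1)/(-aL) ≤ -x := by
        have h1 := le_max_right ((|q| + |bR| + 1)/(-aR)) ((|q| + |bL| + 1)/(-aL))
        have h2 := le_max_right M (max ((|q| + |bR| + 1)/(-aR)) ((|q| + |bL| + 1)/(-aL)))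
        simp only [hM'def] at hx
        linarith
      have hx3 : |q| + |bL| + 1 ≤ (-aL) * (-x) := by
        rw [div_le_iff₀ (by linarith : (0:ℝ) < -aL)] at hx2
        linarith
      have hfx : q ≤ f x := by
        rw [hL x hx1]
        have := le_abs_self q
        have := neg_abs_le bL
        nlinarith
      rw [F2_of_ge hfx, hL x hx1]
      ring
    · intro x hx
      have hx1 : M ≤ x := le_trans (le_max_left _ _) hx
      have hx2 : (|q| + |bR| + 1)/(-aR) ≤ x :=
        le_trans (le_trans (le_max_left _ _) (le_max_right M _)) hx
      have hx3 : |q| + |bR| + 1 ≤ (-aR) * x := by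
        rw [div_le_iff₀ (by linarith : (0:ℝ) < -aR)] at hx2
        linarith
      have hfx : f x ≤ q := by
        rw [hR x hx1]
        have := neg_abs_le q
        have := le_abs_self bR
        nlinarith
      rw [F2_of_le hfx, hR x hx1]
      ring
    · field_simp
      linear_combination hgrad
  · -- 0 < aR, hence 0 < aL
    have hLpos : 0 < aL := by nlinarith [lt_or_gt_of_ne haL]
    set M' := max M (max ((|q| + |bR| + 1)/aR) ((|q| + |bL| + 1)/aL)) with hM'def
    have hM' : 0 < M' := lt_of_lt_of_le hM (le_max_left _ _)
    refine ⟨-(aL/κ), q + q/κ - bL/κ, -(κ*aR), q + κ*q - κ*bR, M', hM', ?_, ?_, ?_⟩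
    · intro x hx
      have hx1 : x ≤ -M := by
        have := le_max_left M (max ((|q| + |bR| + 1)/aR) ((|q| + |bL| + 1)/aL))
        linarith [hx, this]
      have hx2 : (|q| + |bL| + 1)/aL ≤ -x := by
        have h1 := le_max_right ((|q| + |bR| + 1)/aR) ((|q| + |bL| + 1)/aL)
        have h2 := le_max_right M (max ((|q| + |bR| + 1)/aR) ((|q| + |bL| + 1)/aL))
        simp only [hM'def] at hx
        linarith
      have hx3 : |q| + |bL| + 1 ≤ aL * (-x) := by
        rw [div_le_iff₀ hLpos] at hx2
        linarith
      have hfx : f x ≤ q := by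
        rw [hL x hx1]
        have := neg_abs_le q
        have := le_abs_self bL
        nlinarith
      rw [F2_of_le hfx, hL x hx1]
      ring
    · intro x hx
      have hx1 : M ≤ x := le_trans (le_max_left _ _) hx
      have hx2 : (|q| + |bR| + 1)/aR ≤ x :=
        le_trans (le_trans (le_max_left _ _) (le_max_right M _)) hx
      have hx3 : |q| + |bR| + 1 ≤ aR * x := by
        rw [div_le_iff₀ hRpos] at hx2
        linarith
      have hfx : q ≤ f x := by
        rw [hR x hx1]
        have := le_abs_self q
        have := neg_abs_le bR
        nlinarith
      rw [F2_of_ge hfx, hR x hx1]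
      ring
    · field_simp
      linear_combination hgrad

lemma key (n : ℕ) :
    ∀ (f : Equiv.Perm ℝ), Continuous ⇑f →
    ∀ (S : Finset ℝ), (∀ x : ℝ, x ∉ S → IsLocallyAffineAt (⇑f) x) → S.card = n →
    ∀ (aL bL aR bR M : ℝ), 0 < M →
    (∀ x : ℝ, x ≤ -M → f x = aL * x + bL) →
    (∀ x : ℝ, M ≤ x → f x = aR * x + bR) →
    aR * aL = 1 →
    ∃ (k : ℕ) (g : Fin k → Equiv.Perm ℝ),
      (∀ i, InPLF (g i) ∧ g i * g i = 1) ∧ f = (List.ofFn g).prod := by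
  induction n with
  | zero =>
    intro f hc S hna hcard aL bL aR bR M hM hL hR hgrad
    have hS : S = ∅ := Finset.card_eq_zero.mp hcard
    subst hS
    obtain ⟨a, b, hab⟩ := affine_on_of_loc isPreconnected_univ (Set.mem_univ (0:ℝ))
      (fun x _ => hna x (Finset.notMem_empty x))
    have hab' : ∀ x : ℝ, f x = a*x + b := fun x => hab x (Set.mem_univ x)
    have e1 : a*M + b = aR*M + bR := by rw [← hab' M]; exact hR M le_rfl
    have e2 : a*(M+1) + b = aR*(M+1) + bR := by rw [← hab' (M+1)]; exact hR (M+1) (by linarith)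
    have haR : a = aR := by linarith
    have e3 : a*(-M) + b = aL*(-M) + bL := by rw [← hab' (-M)]; exact hL (-M) le_rfl
    have e4 : a*(-M-1) + b = aL*(-M-1) + bL := by
      rw [← hab' (-M-1)]; exact hL (-M-1) (by linarith)
    have haL : a = aL := by linarith
    have ha2 : a * a = 1 := by nth_rewrite 1 [haR]; rw [haL]; exact hgrad
    rcases mul_self_eq_one_iff.mp ha2 with h1 | h1
    · -- f x = x + b  : product of two reflections
      refine ⟨2, ![inv2 (b/2) 1 one_pos, inv2 0 1 one_pos], ?_, ?_⟩
      · intro i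
        fin_cases i <;>
          exact ⟨inv2_inPLF _ _ one_pos, inv2_mul_self _ _ one_pos⟩
      · apply Equiv.ext
        intro x
        have hofn : (List.ofFn ![inv2 (b/2) 1 one_pos, inv2 0 1 one_pos]).prod
            = inv2 (b/2) 1 one_pos * inv2 0 1 one_pos := by
          simp [List.ofFn_succ]
        rw [hofn, Equiv.Perm.mul_apply, inv2_apply, inv2_apply, F2_one, F2_one,
          hab' x, h1]
        ring
    · -- f x = -x + b : a single reflection
      refine ⟨1, ![inv2 (b/2) 1 one_pos], ?_, ?_⟩
      · intro i
        fin_cases i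
        exact ⟨inv2_inPLF _ _ one_pos, inv2_mul_self _ _ one_pos⟩
      · apply Equiv.ext
        intro x
        have hofn : (List.ofFn ![inv2 (b/2) 1 one_pos]).prod = inv2 (b/2) 1 one_pos := by
          simp [List.ofFn_succ]
        rw [hofn, inv2_apply, F2_one, hab' x, h1]
        ring
  | succ n IH =>
    intro f hc S hna hcard aL bL aR bR M hM hL hR hgrad
    have hSne : S.Nonempty := Finset.card_pos.mp (by rw [hcard]; exact Nat.succ_pos n)
    obtain ⟨t, ht⟩ := hSne
    have hcard' : (S.erase t).card = n := by
      rw [Finset.card_erase_of_mem ht, hcard]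
      rfl
    by_cases hat : IsLocallyAffineAt (⇑f) t
    ·
      apply IH f hc (S.erase t) ?_ hcard' aL bL aR bR M hM hL hR hgrad
      intro x hx
      by_cases hxt : x = t
      · rwa [hxt]
      · exact hna x (fun hxS => hx (Finset.mem_erase.mpr ⟨hxt, hxS⟩))
    · -- genuine (possible) break at t
      -- find a punctured neighbourhood avoiding the rest of S
      have hC : IsClosed (↑(S.erase t) : Set ℝ) := (S.erase t).finite_toSet.isClosed
      have htC : t ∈ (↑(S.erase t) : Set ℝ)ᶜ := by simp
      obtain ⟨ε₀, hε₀, hball⟩ := Metric.isOpen_iff.mp hC.isOpen_compl t htC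
      have hfree : ∀ y : ℝ, dist y t < ε₀ → y ≠ t → y ∉ S := by
        intro y hy hyt hyS
        exact (hball hy) (Finset.mem_coe.mpr (Finset.mem_erase.mpr ⟨hyt, hyS⟩))
      -- affine on the left of t
      have hlocL : ∀ y ∈ Set.Ioo (t - ε₀) t, IsLocallyAffineAt (⇑f) y := by
        intro y hy
        apply hna
        apply hfree y ?_ (ne_of_lt hy.2)
        rw [Real.dist_eq, abs_of_neg (by linarith [hy.2] : y - t < 0)]
        linarith [hy.1]
      obtain ⟨s1, b1, haff1⟩ := affine_on_of_loc isPreconnected_Ioo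
        (show t - ε₀/2 ∈ Set.Ioo (t-ε₀) t from ⟨by linarith, by linarith⟩) hlocL
      have h1 : ∀ y ∈ Set.Icc (t-ε₀) t, f y = s1*y + b1 :=
        affine_on_Icc_of_Ioo hc (by linarith) haff1
      -- affine on the right of t
      have hlocR : ∀ y ∈ Set.Ioo t (t + ε₀), IsLocallyAffineAt (⇑f) y := by
        intro y hy
        apply hna
        apply hfree y ?_ (ne_of_gt hy.1)
        rw [Real.dist_eq, abs_of_pos (by linarith [hy.1] : 0 < y - t)]
        linarith [hy.2]
      obtain ⟨s2, b2, haff2⟩ := affine_on_of_loc isPreconnected_Ioo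
        (show t + ε₀/2 ∈ Set.Ioo t (t+ε₀) from ⟨by linarith, by linarith⟩) hlocR
      have h2 : ∀ y ∈ Set.Icc t (t+ε₀), f y = s2*y + b2 :=
        affine_on_Icc_of_Ioo hc (by linarith) haff2
      -- slopes have the same sign
      have hss : 0 < s1 * s2 := slopes_same_sign f.injective hε₀ h1 h2
      -- choose κ and get local affinity at t for the composition
      have hloc_t : ∃ κ : ℝ, ∃ hκ : 0 < κ,
          IsLocallyAffineAt (fun y => F2 (f t) κ (f y)) t := by
        rcases lt_or_ge 0 s1 with hs1 | hs1
        · have hs2 : 0 < s2 := by nlinarith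
          have hr : 0 < s1 / s2 := div_pos hs1 hs2
          refine ⟨Real.sqrt (s1/s2), Real.sqrt_pos.mpr hr, ?_⟩
          apply cancel_break_incr hε₀ (Real.sqrt_pos.mpr hr) h1 h2 hs1 hs2
          rw [Real.mul_self_sqrt hr.le]
          field_simp
        · have hne : s1 ≠ 0 := by
            intro h0; rw [h0] at hss; simp at hss
          have hs1' : s1 < 0 := lt_of_le_of_ne hs1 hne
          have hs2 : s2 < 0 := by nlinarith
          have hr : 0 < s2 / s1 := div_pos_of_neg_of_neg hs2 hs1'
          refine ⟨Real.sqrt (s2/s1), Real.sqrt_pos.mpr hr, ?_⟩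
          apply cancel_break_decr hε₀ (Real.sqrt_pos.mpr hr) h1 h2 hs1' hs2
          rw [Real.mul_self_sqrt hr.le]
          field_simp
      obtain ⟨κ, hκ, hloct⟩ := hloc_t
      set σ : Equiv.Perm ℝ := inv2 (f t) κ hκ with hσdef
      set h : Equiv.Perm ℝ := σ * f with hhdef
      have hh_apply : ∀ y : ℝ, h y = F2 (f t) κ (f y) := by
        intro y
        rw [hhdef, Equiv.Perm.mul_apply, hσdef, inv2_apply]
      have hh_fun : ⇑h = fun y => F2 (f t) κ (f y) := funext hh_apply
      have hch : Continuous ⇑h := by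
        rw [hh_fun]
        exact (F2_continuous (f t) κ).comp hc
      have hnah : ∀ x : ℝ, x ∉ S.erase t → IsLocallyAffineAt (⇑h) x := by
        intro x hx
        rw [hh_fun]
        by_cases hxt : x = t
        · subst hxt
          exact hloct
        · have hxS : x ∉ S := fun h' => hx (Finset.mem_erase.mpr ⟨hxt, h'⟩)
          have hfxq : f x ≠ f t := fun h' => hxt (f.injective h')
          exact cancel_break_other hc hκ hfxq (hna x hxS)
      obtain ⟨aL', bL', aR', bR', M', hM', hL', hR', hgrad'⟩ :=
        tails_transform (f := ⇑f) (f t) κ hκ hM hL hR hgrad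
      have hL'' : ∀ x : ℝ, x ≤ -M' → h x = aL' * x + bL' := by
        intro x hx; rw [hh_apply]; exact hL' x hx
      have hR'' : ∀ x : ℝ, M' ≤ x → h x = aR' * x + bR' := by
        intro x hx; rw [hh_apply]; exact hR' x hx
      obtain ⟨k, g, hg, hprod⟩ := IH h hch (S.erase t) hnah hcard' aL' bL' aR' bR' M'
        hM' hL'' hR'' hgrad'
      refine ⟨k + 1, Fin.cons σ g, ?_, ?_⟩
      · intro i
        induction i using Fin.cases with
        | zero =>
          rw [Fin.cons_zero]
          exact ⟨inv2_inPLF _ _ hκ, inv2_mul_self _ _ hκ⟩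
        | succ j =>
          rw [Fin.cons_succ]
          exact hg j
      · rw [cons_prod, ← hprod, hhdef, ← mul_assoc, hσdef, inv2_mul_self, one_mul]


end PLFAux

/-- If f ∈ PLF(ℝ) has leftmost and rightmost gradients with γ_R(f) · γ_L(f) = 1, then f
is a composite of finitely many involutions of PLF(ℝ). -/
theorem stmt_19 (f : Equiv.Perm ℝ) (hf : InPLF f)
    (aL bL aR bR M : ℝ) (hM : 0 < M)
    (hL : ∀ x : ℝ, x ≤ -M → f x = aL * x + bL)
    (hR : ∀ x : ℝ, M ≤ x → f x = aR * x + bR)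
    (hgrad : aR * aL = 1) :
    ∃ (n : ℕ) (g : Fin n → Equiv.Perm ℝ),
      (∀ i, InPLF (g i) ∧ g i * g i = 1) ∧ f = (List.ofFn g).prod := by
  classical
  obtain ⟨⟨hc, _⟩, hfin⟩ := hf
  have hna : ∀ x : ℝ, x ∉ hfin.toFinset → IsLocallyAffineAt (⇑f) x := by
    intro x hx
    by_contra hcon
    exact hx (hfin.mem_toFinset.mpr hcon)
  exact key hfin.toFinset.card f hc hfin.toFinset hna rfl aL bL aR bR M hM hL hR hgrad
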